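/- For all integers k ≥ 1 and n ≥ 1, every star forest on at most n vertices that contains no induced kK_{1,k} (the disjoint union of k copies of the star K_{1,k}) is isomorphic to an induced subgraph of the disjoint union of k − 1 copies of K_{1,n} and n copies of K_{1,k−1}. -/

import Mathlib

open SimpleGraph

/-- The star `K_{1,p}`, with center `0`. -/
def starGraph (p : ℕ) : SimpleGraph (Fin (p + 1)) :=
  SimpleGraph.fromRel (fun i _ => i = 0)

/-- A star forest: every connected component is a star `K_{1,p}` for some `p ≥ 0`. -/
def IsStarForest {V : Type*} (G : SimpleGraph V) : Prop :=
  ∀ c : G.ConnectedComponent, ∃ p, Nonempty (G.induce c.supp ≃g _root_.starGraph p)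

/-- The disjoint union of `k` copies of the star `K_{1,k}`. -/
def kClaws (k : ℕ) : SimpleGraph (Fin k × Fin (k + 1)) :=
  SimpleGraph.fromRel (fun x y => x.1 = y.1 ∧ x.2 = 0)

/-- The disjoint union of `k - 1` copies of `K_{1,n}` (the left summand)
and `n` copies of `K_{1,k-1}` (the right summand). -/
def SFtarget (k n : ℕ) : SimpleGraph ((Fin (k - 1) × Fin (n + 1)) ⊕ (Fin n × Fin k)) :=
  SimpleGraph.fromRel (fun x y =>
    match x, y with
    | Sum.inl a, Sum.inl b => a.1 = b.1 ∧ (a.2 : ℕ) = 0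
    | Sum.inr a, Sum.inr b => a.1 = b.1 ∧ (a.2 : ℕ) = 0
    | _, _ => False)

lemma starGraph_adj {q : ℕ} (a b : Fin (q + 1)) :
    (_root_.starGraph q).Adj a b ↔ a ≠ b ∧ (a = 0 ∨ b = 0) := by
  simp [_root_.starGraph, SimpleGraph.fromRel_adj]

lemma kClaws_adj {k : ℕ} (x y : Fin k × Fin (k + 1)) :
    (kClaws k).Adj x y ↔ x ≠ y ∧ ((x.1 = y.1 ∧ x.2 = 0) ∨ (y.1 = x.1 ∧ y.2 = 0)) := by
  simp [kClaws, SimpleGraph.fromRel_adj]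

/-- Every star forest on at most `n` vertices with no induced `kK_{1,k}` is an
induced subgraph of `(k-1)·K_{1,n} + n·K_{1,k-1}`. -/
theorem kclaw_free_star_forest_embeds (k n : ℕ) (hk : 1 ≤ k) (hn : 1 ≤ n)
    (W : Type) [Fintype W] (G : SimpleGraph W) (hG : IsStarForest G)
    (hcard : Fintype.card W ≤ n) (hfree : ¬ Nonempty (kClaws k ↪g G)) :
    Nonempty (G ↪g SFtarget k n) := by
  classical
  choose p hp using hG
  have e : ∀ c : G.ConnectedComponent, G.induce c.supp ≃g _root_.starGraph (p c) :=
    fun c => (hp c).some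
  -- adjacency inside a component, read through the iso `e c`
  have adjG : ∀ (c : G.ConnectedComponent) (v w : c.supp),
      G.Adj (v : W) (w : W) ↔ (e c v ≠ e c w ∧ (e c v = 0 ∨ e c w = 0)) := by
    intro c v w
    have h1 : G.Adj (v : W) (w : W) ↔ (G.induce c.supp).Adj v w := Iff.rfl
    rw [h1, ← (e c).map_adj_iff, _root_.starGraph_adj]
  -- membership of images of `(e c).symm`
  have hmemsym : ∀ (c : G.ConnectedComponent) (y : Fin (p c + 1)),
      G.connectedComponentMk (((e c).symm y : c.supp) : W) = c :=
    fun c y => ((e c).symm y).2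
  -- component sizes
  have hpn : ∀ c : G.ConnectedComponent, p c + 1 ≤ n := by
    intro c
    have h1 : Fintype.card c.supp = p c + 1 := by
      simpa using Fintype.card_congr (e c).toEquiv
    have h2 : Fintype.card c.supp ≤ Fintype.card W :=
      Fintype.card_le_of_injective _ Subtype.val_injective
    omega
  -- at most k-1 big components
  have hbig : Fintype.card {c : G.ConnectedComponent // k ≤ p c} ≤ k - 1 := by
    by_contra hle
    push_neg at hle
    have hcge : Fintype.card (Fin k) ≤ Fintype.card {c : G.ConnectedComponent // k ≤ p c} := by
      simp only [Fintype.card_fin]; omega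
    obtain ⟨C⟩ := Function.Embedding.nonempty_of_card_le hcge
    set f : Fin k × Fin (k + 1) → W :=
      fun x => (((e (C x.1).1).symm (Fin.castLE (Nat.succ_le_succ (C x.1).2) x.2) :
        ((C x.1).1 : G.ConnectedComponent).supp) : W) with hf
    have hfc : ∀ x, G.connectedComponentMk (f x) = (C x.1).1 := fun x => hmemsym _ _
    have hinj : Function.Injective f := by
      rintro ⟨i, a⟩ ⟨j, b⟩ h
      have hij : C i = C j := by
        have h1 := hfc (i, a)
        have h2 := hfc (j, b)
        rw [h] at h1
        exact Subtype.ext (h1.symm.trans h2)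
      have hij' : i = j := C.injective hij
      subst hij'
      have h2 : ((e (C i).1).symm (Fin.castLE (Nat.succ_le_succ (C i).2) a) :
          ((C i).1 : G.ConnectedComponent).supp)
          = (e (C i).1).symm (Fin.castLE (Nat.succ_le_succ (C i).2) b) :=
        Subtype.val_injective h
      have h3 := (e (C i).1).symm.injective h2
      have h4 : a = b := by
        have := congrArg Fin.val h3
        simpa [Fin.ext_iff] using this
      rw [h4]
    have hadj : ∀ x y, G.Adj (f x) (f y) ↔ (kClaws k).Adj x y := by
      rintro ⟨i, a⟩ ⟨j, b⟩
      by_cases hij : i = j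
      · subst hij
        rw [kClaws_adj]
        have := adjG (C i).1 ((e (C i).1).symm (Fin.castLE (Nat.succ_le_succ (C i).2) a))
          ((e (C i).1).symm (Fin.castLE (Nat.succ_le_succ (C i).2) b))
        rw [show f (i, a) = _ from rfl, show f (i, b) = _ from rfl, this]
        simp [RelIso.apply_symm_apply, Prod.ext_iff, Fin.ext_iff, -Fin.val_eq_zero_iff]
      · constructor
        · intro h
          exfalso
          have := (ConnectedComponent.sound h.reachable)
          rw [hfc (i, a), hfc (j, b)] at this
          exact hij (C.injective (Subtype.ext this))
        · intro h
          rw [kClaws_adj] at h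
          exfalso
          rcases h.2 with ⟨h1, _⟩ | ⟨h1, _⟩
          · exact hij h1
          · exact hij h1.symm
    exact hfree ⟨⟨⟨f, hinj⟩, fun {x y} => hadj x y⟩⟩
  -- at most n components in total, hence at most n small ones
  have hcomp : Fintype.card {c : G.ConnectedComponent // ¬ k ≤ p c} ≤ n := by
    refine le_trans ?_ hcard
    have : Function.Injective
        (fun c : {c : G.ConnectedComponent // ¬ k ≤ p c} => (c.1.exists_rep).choose) := by
      intro c d h
      dsimp only at h
      have hc := (c.1.exists_rep).choose_spec
      have hd := (d.1.exists_rep).choose_spec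
      rw [h] at hc
      exact Subtype.ext (hc.symm.trans hd)
    exact Fintype.card_le_of_injective _ this
  obtain ⟨bIdx⟩ : Nonempty ({c : G.ConnectedComponent // k ≤ p c} ↪ Fin (k - 1)) :=
    Function.Embedding.nonempty_of_card_le (by simpa using hbig)
  obtain ⟨sIdx⟩ : Nonempty ({c : G.ConnectedComponent // ¬ k ≤ p c} ↪ Fin n) :=
    Function.Embedding.nonempty_of_card_le (by simpa using hcomp)
  -- the map, defined per component
  set g : ∀ c : G.ConnectedComponent, c.supp → (Fin (k - 1) × Fin (n + 1)) ⊕ (Fin n × Fin k) :=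
    fun c v =>
      if h : k ≤ p c then Sum.inl (bIdx ⟨c, h⟩, Fin.castLE (le_trans (hpn c) (Nat.le_succ n)) (e c v))
      else Sum.inr (sIdx ⟨c, h⟩, Fin.castLE (by omega) (e c v)) with hg
  have gcomp : ∀ (c d : G.ConnectedComponent) (v : c.supp) (w : d.supp),
      g c v = g d w → c = d := by
    intro c d v w h
    rw [hg] at h
    by_cases hc : k ≤ p c <;> by_cases hd : k ≤ p d <;> simp [hc, hd] at h <;> tauto
  have ginj : ∀ (c : G.ConnectedComponent) (v w : c.supp), g c v = g c w → v = w := by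
    intro c v w h
    rw [hg] at h
    by_cases hc : k ≤ p c <;> simp [hc, Fin.ext_iff] at h
    · exact (e c).injective (Fin.ext h)
    · exact (e c).injective (Fin.ext h)
  have gadj : ∀ (c : G.ConnectedComponent) (v w : c.supp),
      (SFtarget k n).Adj (g c v) (g c w) ↔ G.Adj (v : W) (w : W) := by
    intro c v w
    rw [adjG c v w]
    have E : ∀ a b : Fin (p c + 1), (a ≠ b ∧ (a = 0 ∨ b = 0)) ↔
        ((a : ℕ) ≠ (b : ℕ) ∧ ((a : ℕ) = 0 ∨ (b : ℕ) = 0)) := by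
      intro a b; simp [Fin.ext_iff, -Fin.val_eq_zero_iff]
    rw [E, hg]
    by_cases hc : k ≤ p c <;>
      simp [hc, SFtarget, SimpleGraph.fromRel_adj, Prod.ext_iff, Fin.ext_iff, -Fin.val_eq_zero_iff] <;> tauto
  have gnadj : ∀ (c d : G.ConnectedComponent) (v : c.supp) (w : d.supp), c ≠ d →
      ¬ (SFtarget k n).Adj (g c v) (g d w) := by
    intro c d v w hcd h
    rw [hg] at h
    by_cases hc : k ≤ p c <;> by_cases hd : k ≤ p d <;>
      simp [hc, hd, SFtarget, SimpleGraph.fromRel_adj, Prod.ext_iff, Subtype.mk.injEq] at h <;>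
      tauto
  -- casting across equal components
  have gcast : ∀ (c d : G.ConnectedComponent) (hdc : d = c) (w : W) (hw : w ∈ d.supp),
      g d ⟨w, hw⟩ = g c ⟨w, hdc ▸ hw⟩ := by
    rintro c d rfl w hw; rfl
  -- assemble the embedding
  refine ⟨⟨⟨fun w => g (G.connectedComponentMk w) ⟨w, rfl⟩, ?_⟩, ?_⟩⟩
  · intro v w h
    dsimp at h
    have hcd := gcomp _ _ _ _ h
    rw [gcast (G.connectedComponentMk v) (G.connectedComponentMk w) hcd.symm w rfl] at h
    have := ginj _ _ _ h
    exact congrArg Subtype.val this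
  · intro v w
    show (SFtarget k n).Adj (g (G.connectedComponentMk v) ⟨v, rfl⟩) (g (G.connectedComponentMk w) ⟨w, rfl⟩) ↔ G.Adj v w
    by_cases hcd : G.connectedComponentMk v = G.connectedComponentMk w
    · rw [gcast (G.connectedComponentMk v) (G.connectedComponentMk w) hcd.symm w rfl]
      exact gadj (G.connectedComponentMk v) ⟨v, rfl⟩ ⟨w, hcd.symm ▸ rfl⟩
    · constructor
      · intro h
        exact absurd h (gnadj _ _ _ _ hcd)
      · intro h
        exact absurd (ConnectedComponent.sound h.reachable) hcd
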